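/- arXiv:1807.08329 — 3 statements merged into one kernel-verified Lean document; each statement's English description precedes it below -/
import Mathlib

section
/- Let G be a finite solvable group and let N₁, …, N_r be normal subgroups of G with ⋂ᵢ Nᵢ = 1. Then for every natural number n, the index |G : F_n(G)| of the n-th Fitting subgroup divides (and in particular is at most) the product over i of the indices |(G/Nᵢ) : F_n(G/Nᵢ)|. -/
open Subgroup

/-- The Fitting subgroup: the join of all nilpotent normal subgroups. -/
def FittingSubgroup (G : Type*) [Group G] : Subgroup G :=
  sSup {N : Subgroup G | N.Normal ∧ Group.IsNilpotent ↥N}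

/-- The Fitting series `F_0 = ⊥`, `F_{n+1}/F_n = F(G/F_n)`.  (Each term is in fact
normal, so taking `normalCore` below does not change the subgroup.) -/
def FittingSeries (G : Type*) [Group G] : ℕ → Subgroup G
  | 0 => ⊥
  | n + 1 =>
      Subgroup.comap (QuotientGroup.mk' (FittingSeries G n).normalCore)
        (FittingSubgroup (G ⧸ (FittingSeries G n).normalCore))

/-- The Fitting length: the least `n` with `F_n(G) = G`. -/
noncomputable def fittingLength (G : Type*) [Group G] : ℕ :=
  sInf {n : ℕ | FittingSeries G n = ⊤}

open Pointwise

section Aux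

variable {G : Type*} [Group G]

/-- An intersection of normal subgroups is normal. -/
lemma normal_iInf' {ι : Sort*} {f : ι → Subgroup G} (h : ∀ i, (f i).Normal) :
    (⨅ i, f i).Normal := by
  constructor
  intro x hx g
  rw [Subgroup.mem_iInf] at hx ⊢
  exact fun i => (h i).conj_mem _ (hx i) g

/-- A characteristic subgroup of a normal subgroup is normal. -/
lemma charMapNormal (N : Subgroup G) [N.Normal] (P : Subgroup ↥N) [hc : P.Characteristic] :
    (P.map N.subtype).Normal := by
  constructor
  rintro x ⟨y, hy, rfl⟩ g
  have h := Subgroup.characteristic_iff_le_comap.mp hc (MulAut.conjNormal g)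
  exact ⟨MulAut.conjNormal g y, h hy, by simp [MulAut.conjNormal_apply]⟩

/-- In a finite group, for every nilpotent normal subgroup `N` and prime `p`, there is a
normal `p`-subgroup of `G` inside `N` whose index in `N` is prime to `p` (namely the
Sylow `p`-subgroup of `N`). -/
lemma sylow_map_package [Finite G] (p : ℕ) [Fact p.Prime] (N : Subgroup G) [N.Normal]
    (hN : Group.IsNilpotent ↥N) :
    ∃ A : Subgroup G, A.Normal ∧ IsPGroup p A ∧ A ≤ N ∧ ¬ p ∣ A.relIndex N := by
  obtain ⟨P⟩ := (inferInstance : Nonempty (Sylow p ↥N))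
  have h03 := (isNilpotent_of_finite_tfae (G := ↥N)).out 0 3
  have hnorm : (↑P : Subgroup ↥N).Normal := h03.mp hN p ‹_› P
  haveI := hnorm
  haveI : (↑P : Subgroup ↥N).Characteristic := Sylow.characteristic_of_normal P hnorm
  refine ⟨(↑P : Subgroup ↥N).map N.subtype, charMapNormal N _, P.isPGroup'.map _,
    map_subtype_le _, ?_⟩
  have h1 : ((↑P : Subgroup ↥N).map N.subtype).relIndex N = (↑P : Subgroup ↥N).index := by
    show (((↑P : Subgroup ↥N).map N.subtype).subgroupOf N).index = _
    rw [show ((↑P : Subgroup ↥N).map N.subtype).subgroupOf N = (↑P : Subgroup ↥N) from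
      comap_map_eq_self_of_injective N.subtype_injective _]
  rw [h1]
  exact P.not_dvd_index

/-- Fitting's theorem for finite groups: the join of two nilpotent normal subgroups
is nilpotent. -/
lemma isNilpotent_sup [Finite G] (H K : Subgroup G) (hHn : H.Normal) (hKn : K.Normal)
    (hH : Group.IsNilpotent ↥H) (hK : Group.IsNilpotent ↥K) :
    Group.IsNilpotent ↥(H ⊔ K) := by
  haveI := hHn; haveI := hKn
  have h30 := (isNilpotent_of_finite_tfae (G := ↥(H ⊔ K))).out 3 0
  refine h30.mp ?_
  intro p hp P
  obtain ⟨A, hAn, hAp, hAle, hAi⟩ := sylow_map_package p H hH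
  obtain ⟨B, hBn, hBp, hBle, hBi⟩ := sylow_map_package p K hK
  haveI := hAn; haveI := hBn
  have hABp : IsPGroup p ↥(A ⊔ B) := IsPGroup.to_sup_of_normal_right hAp hBp
  haveI : (A ⊔ B).Normal := Subgroup.sup_normal A B
  haveI : (H ⊔ B).Normal := Subgroup.sup_normal H B
  have hchain1 : A ⊔ B ≤ H ⊔ B := sup_le (hAle.trans le_sup_left) le_sup_right
  have hchain2 : H ⊔ B ≤ H ⊔ K := sup_le le_sup_left (hBle.trans le_sup_right)
  have hfac1 : ¬ p ∣ (A ⊔ B).relIndex (H ⊔ B) := by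
    intro hdvd
    have e1 : (A ⊔ B) ⊔ H = H ⊔ B := by
      rw [sup_comm A B, sup_assoc, sup_eq_right.mpr hAle, sup_comm]
    have h2 : (A ⊔ B).relIndex (H ⊔ B) ∣ A.relIndex H := by
      rw [← e1, Subgroup.relIndex_sup_left, ← Subgroup.inf_relIndex_right]
      exact Subgroup.relIndex_dvd_of_le_left _ (le_inf le_sup_left hAle)
    exact hAi (hdvd.trans h2)
  have hfac2 : ¬ p ∣ (H ⊔ B).relIndex (H ⊔ K) := by
    intro hdvd
    have e2 : (H ⊔ B) ⊔ K = H ⊔ K := by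
      rw [sup_assoc, sup_eq_right.mpr hBle]
    have h2 : (H ⊔ B).relIndex (H ⊔ K) ∣ B.relIndex K := by
      rw [← e2, Subgroup.relIndex_sup_left, ← Subgroup.inf_relIndex_right]
      exact Subgroup.relIndex_dvd_of_le_left _ (le_inf le_sup_right hBle)
    exact hBi (hdvd.trans h2)
  have hindex : ¬ p ∣ (A ⊔ B).relIndex (H ⊔ K) := by
    rw [← Subgroup.relIndex_mul_relIndex _ _ _ hchain1 hchain2, hp.out.dvd_mul]
    exact not_or.mpr ⟨hfac1, hfac2⟩
  have hABle : A ⊔ B ≤ H ⊔ K := hchain1.trans hchain2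
  set A' : Subgroup ↥(H ⊔ K) := (A ⊔ B).subgroupOf (H ⊔ K) with hA'
  have hA'n : A'.Normal := Subgroup.Normal.subgroupOf ‹(A ⊔ B).Normal› _
  haveI := hA'n
  have hA'p : IsPGroup p ↥A' := hABp.of_equiv (Subgroup.subgroupOfEquivOfLe hABle).symm
  obtain ⟨Q, hQ⟩ := hA'p.exists_le_sylow
  obtain ⟨g, hg⟩ := MulAction.exists_smul_eq ↥(H ⊔ K) Q P
  have hA'P : A' ≤ ↑P := by
    calc A' = MulAut.conj g • A' := (Subgroup.Normal.conj_smul_eq_self g A').symm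
      _ ≤ MulAut.conj g • (Q : Subgroup ↥(H ⊔ K)) := by
          exact Subgroup.pointwise_smul_le_pointwise_smul_iff.mpr hQ
      _ = ↑(g • Q) := (Sylow.coe_subgroup_smul).symm
      _ = ↑P := by rw [hg]
  have hA'i : A'.index = (A ⊔ B).relIndex (H ⊔ K) := rfl
  have hne : ¬ p ∣ A'.relIndex ↑P := by
    intro hd
    exact hindex (hA'i ▸ hd.trans (Subgroup.relIndex_dvd_index_of_le hA'P))
  haveI : (A'.subgroupOf (↑P : Subgroup ↥(H ⊔ K))).Normal := Subgroup.Normal.subgroupOf hA'n _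
  have hq : IsPGroup p ((↥(↑P : Subgroup ↥(H ⊔ K))) ⧸ (A'.subgroupOf ↑P)) :=
    P.isPGroup'.to_quotient _
  obtain ⟨m, hm⟩ := IsPGroup.iff_card.mp hq
  have hrel : A'.relIndex ↑P = p ^ m := by
    rw [Subgroup.relIndex, Subgroup.index_eq_card]; exact hm
  have hm0 : m = 0 := by
    by_contra h
    exact hne (hrel ▸ dvd_pow_self p h)
  have hone : A'.relIndex ↑P = 1 := by rw [hrel, hm0, pow_zero]
  have hPA' : (↑P : Subgroup ↥(H ⊔ K)) = A' :=
    le_antisymm (Subgroup.relIndex_eq_one.mp hone) hA'P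
  rw [hPA']
  exact hA'n

/-- The Fitting subgroup of a finite group is normal and (Fitting's theorem) nilpotent. -/
lemma fittingSubgroup_mem' (H : Type*) [Group H] [Finite H] :
    (FittingSubgroup H).Normal ∧ Group.IsNilpotent ↥(FittingSubgroup H) := by
  haveI : Finite (Subgroup H) :=
    Finite.of_injective (fun K => (K : Set H)) SetLike.coe_injective
  set T := {N : Subgroup H | N.Normal ∧ Group.IsNilpotent ↥N} with hT
  classical
  have key : ∀ s : Finset (Subgroup H), (↑s ⊆ T) → s.sup id ∈ T := by
    intro s
    induction s using Finset.induction_on with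
    | empty =>
        intro _
        simp only [Finset.sup_empty]
        exact ⟨inferInstance, inferInstance⟩
    | @insert a s ha ih =>
        intro hsub
        have haT : a ∈ T := hsub (Finset.mem_insert_self a s)
        have hsT : s.sup id ∈ T := ih fun x hx => hsub (Finset.mem_insert_of_mem hx)
        rw [Finset.sup_insert]
        haveI := haT.1; haveI := hsT.1
        exact ⟨Subgroup.sup_normal a (s.sup id), isNilpotent_sup _ _ haT.1 hsT.1 haT.2 hsT.2⟩
  have hTfin : T.Finite := Set.toFinite T
  have hF : FittingSubgroup H = hTfin.toFinset.sup id := by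
    rw [Finset.sup_id_eq_sSup, Set.Finite.coe_toFinset]
    rfl
  rw [hF]
  exact key _ (by simp)

lemma le_fittingSubgroup {X : Subgroup G} (h1 : X.Normal) (h2 : Group.IsNilpotent ↥X) :
    X ≤ FittingSubgroup G :=
  le_sSup ⟨h1, h2⟩

lemma fittingSeries_normal [Finite G] : ∀ n : ℕ, (FittingSeries G n).Normal
  | 0 => show (⊥ : Subgroup G).Normal from inferInstance
  | n + 1 => by
      show (Subgroup.comap _ (FittingSubgroup _)).Normal
      haveI := (fittingSubgroup_mem' (G ⧸ (FittingSeries G n).normalCore)).1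
      exact Subgroup.normal_comap _

/-- The key containment: if the `M i` are normal with trivial intersection, then the
intersection of the pullbacks of the Fitting series of the quotients is contained in the
Fitting series of `G`. -/
lemma iInf_comap_fittingSeries_le [Finite G] {r : ℕ}
    (M : Fin r → Subgroup G) [hM : ∀ i, (M i).Normal] (hint : (⨅ i, M i) = ⊥) (n : ℕ) :
    (⨅ i, Subgroup.comap (QuotientGroup.mk' (M i)) (FittingSeries (G ⧸ M i) n))
      ≤ FittingSeries G n := by
  induction n with
  | zero =>
      have : ∀ i, Subgroup.comap (QuotientGroup.mk' (M i)) (FittingSeries (G ⧸ M i) 0) = M i := by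
        intro i
        show Subgroup.comap (QuotientGroup.mk' (M i)) ⊥ = M i
        rw [MonoidHom.comap_bot, QuotientGroup.ker_mk']
      simp only [this]
      rw [hint]
      exact le_rfl
  | succ n ih =>
      set F := FittingSeries G n with hF
      set τ := QuotientGroup.mk' F.normalCore with hτ
      set K' := ⨅ i, Subgroup.comap (QuotientGroup.mk' (M i))
        (FittingSeries (G ⧸ M i) (n + 1)) with hK'
      show K' ≤ Subgroup.comap τ (FittingSubgroup (G ⧸ F.normalCore))
      have hK'n : K'.Normal := by
        apply normal_iInf'
        intro i
        haveI := fittingSeries_normal (G := G ⧸ M i) (n + 1)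
        exact Subgroup.normal_comap _
      set ρ := fun i => (QuotientGroup.mk' (FittingSeries (G ⧸ M i) n).normalCore).comp
        (QuotientGroup.mk' (M i)) with hρ
      have hmem : ∀ (x : ↥K') (i : Fin r),
          ρ i (x : G) ∈ FittingSubgroup ((G ⧸ M i) ⧸ (FittingSeries (G ⧸ M i) n).normalCore) := by
        intro x i
        exact Subgroup.mem_iInf.mp x.2 i
      set ψ : ↥K' →* ∀ i, ↥(FittingSubgroup ((G ⧸ M i) ⧸ (FittingSeries (G ⧸ M i) n).normalCore)) :=
        { toFun := fun x i => ⟨ρ i (x : G), hmem x i⟩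
          map_one' := by funext i; ext; simp
          map_mul' := fun a b => by funext i; ext; simp } with hψ
      set φ : ↥K' →* G ⧸ F.normalCore := τ.comp K'.subtype with hφ
      have hker : ψ.ker ≤ φ.ker := by
        intro x hx
        rw [MonoidHom.mem_ker] at hx ⊢
        have hxi : ∀ i, (x : G) ∈ Subgroup.comap (QuotientGroup.mk' (M i))
            (FittingSeries (G ⧸ M i) n) := by
          intro i
          have := congrFun hx i
          rw [Subtype.ext_iff] at this
          simp only [hψ, MonoidHom.coe_mk, OneHom.coe_mk] at this
          have h2 : QuotientGroup.mk' (M i) (x : G) ∈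
              (FittingSeries (G ⧸ M i) n).normalCore := by
            rw [← QuotientGroup.ker_mk' (FittingSeries (G ⧸ M i) n).normalCore,
              MonoidHom.mem_ker]
            exact this
          exact Subgroup.mem_comap.mpr ((FittingSeries (G ⧸ M i) n).normalCore_le h2)
        have hxK : (x : G) ∈ F := ih (Subgroup.mem_iInf.mpr hxi)
        have hxF : (x : G) ∈ F.normalCore := by
          haveI := fittingSeries_normal (G := G) n
          rwa [Subgroup.normalCore_eq_self]
        show τ (x : G) = 1
        rw [← MonoidHom.mem_ker, QuotientGroup.ker_mk']
        exact hxF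
      haveI : ∀ i, Group.IsNilpotent
          ↥(FittingSubgroup ((G ⧸ M i) ⧸ (FittingSeries (G ⧸ M i) n).normalCore)) :=
        fun i => (fittingSubgroup_mem' _).2
      have h1 : Group.IsNilpotent (↥K' ⧸ ψ.ker) :=
        nilpotent_of_mulEquiv (QuotientGroup.quotientKerEquivRange ψ).symm
      have hsurj : Function.Surjective
          (QuotientGroup.map ψ.ker φ.ker (MonoidHom.id ↥K') hker) := by
        intro y
        obtain ⟨x, rfl⟩ := QuotientGroup.mk_surjective y
        exact ⟨QuotientGroup.mk x, rfl⟩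
      have h2 : Group.IsNilpotent (↥K' ⧸ φ.ker) :=
        nilpotent_of_surjective _ hsurj
      have h3 : Group.IsNilpotent ↥φ.range :=
        nilpotent_of_mulEquiv (QuotientGroup.quotientKerEquivRange φ)
      have hrange : φ.range = Subgroup.map τ K' := by
        rw [hφ, MonoidHom.range_comp, Subgroup.range_subtype]
      have h4 : Group.IsNilpotent ↥(Subgroup.map τ K') := hrange ▸ h3
      have h5 : (Subgroup.map τ K').Normal :=
        hK'n.map τ (QuotientGroup.mk'_surjective _)
      have h6 : Subgroup.map τ K' ≤ FittingSubgroup (G ⧸ F.normalCore) :=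
        le_fittingSubgroup h5 h4
      calc K' ≤ Subgroup.comap τ (Subgroup.map τ K') := Subgroup.le_comap_map _ _
        _ ≤ _ := Subgroup.comap_mono h6

lemma index_inf_dvd (A B : Subgroup G) [A.Normal] : (A ⊓ B).index ∣ A.index * B.index := by
  have h1 : (A ⊓ B).relIndex B * B.index = (A ⊓ B).index :=
    Subgroup.relIndex_mul_index inf_le_right
  rw [← h1, Subgroup.inf_relIndex_right]
  exact mul_dvd_mul (Subgroup.relIndex_dvd_index_of_normal A B) dvd_rfl

lemma index_iInf_dvd {r : ℕ} (f : Fin r → Subgroup G)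
    (h : ∀ i, (f i).Normal) : (⨅ i, f i).index ∣ ∏ i, (f i).index := by
  classical
  have key : ∀ s : Finset (Fin r), (s.inf f).index ∣ ∏ i ∈ s, (f i).index := by
    intro s
    induction s using Finset.induction_on with
    | empty => simp
    | @insert a s ha ih =>
        rw [Finset.inf_insert, Finset.prod_insert ha]
        haveI := h a
        exact (index_inf_dvd (f a) (s.inf f)).trans (mul_dvd_mul dvd_rfl ih)
  have huniv : (Finset.univ.inf f) = ⨅ i, f i := by
    rw [Finset.inf_eq_iInf]
    simp
  rw [← huniv]
  exact key Finset.univ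

end Aux

/-- If `N₁, …, N_r` are normal subgroups of the finite solvable group `G` with trivial
intersection, then `|G : F_n(G)|` divides (hence is at most) `∏ᵢ |(G/Nᵢ) : F_n(G/Nᵢ)|`. -/
theorem fitting_index_dvd_prod_of_iInf_eq_bot (G : Type*) [Group G] [Finite G] [Group.IsSolvable G]
    {r : ℕ} (N : Fin r → Subgroup G) (hnorm : ∀ i, (N i).Normal)
    (hint : (⨅ i, N i) = ⊥) (n : ℕ) :
    (FittingSeries G n).index ∣
        ∏ i, (FittingSeries (G ⧸ (N i).normalCore) n).index ∧
      (FittingSeries G n).index ≤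
        ∏ i, (FittingSeries (G ⧸ (N i).normalCore) n).index := by
  haveI : ∀ i, ((N i).normalCore).Normal := fun i => Subgroup.normalCore_normal _
  have hint' : (⨅ i, (N i).normalCore) = ⊥ := by
    rw [← le_bot_iff, ← hint]
    exact iInf_mono fun i => Subgroup.normalCore_le _
  have hle := iInf_comap_fittingSeries_le (fun i => (N i).normalCore) hint' n
  have hdvd1 : (FittingSeries G n).index ∣
      (⨅ i, Subgroup.comap (QuotientGroup.mk' ((N i).normalCore))
        (FittingSeries (G ⧸ (N i).normalCore) n)).index :=
    Subgroup.index_dvd_of_le hle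
  have hnorm2 : ∀ i, (Subgroup.comap (QuotientGroup.mk' ((N i).normalCore))
      (FittingSeries (G ⧸ (N i).normalCore) n)).Normal := by
    intro i
    haveI := fittingSeries_normal (G := G ⧸ (N i).normalCore) n
    exact Subgroup.normal_comap _
  have hdvd2 := index_iInf_dvd _ hnorm2
  have heq : ∀ i, (Subgroup.comap (QuotientGroup.mk' ((N i).normalCore))
      (FittingSeries (G ⧸ (N i).normalCore) n)).index =
      (FittingSeries (G ⧸ (N i).normalCore) n).index := fun i =>
    Subgroup.index_comap_of_surjective _ (QuotientGroup.mk'_surjective _)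
  have hdvd : (FittingSeries G n).index ∣
      ∏ i, (FittingSeries (G ⧸ (N i).normalCore) n).index := by
    refine hdvd1.trans (hdvd2.trans ?_)
    exact dvd_of_eq (Finset.prod_congr rfl fun i _ => heq i)
  refine ⟨hdvd, Nat.le_of_dvd ?_ hdvd⟩
  apply Nat.pos_of_ne_zero
  rw [Finset.prod_ne_zero_iff]
  intro i _
  exact Subgroup.index_ne_zero_of_finite
end

section
/- Let A = FH be a Frobenius group with kernel F and complement H acting coprimely by automorphisms on a finite solvable group G. If C_G(H) = 1, then [G, F] = 1, and consequently |G| = |C_G(F)|. -/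
open Finset

/-- Fixed points of a subgroup `S ≤ A` under an action of `A` on `G` by automorphisms. -/
def fixedSubgroup (A : Type*) [Group A] {G : Type*} [Group G] [MulDistribMulAction A G]
    (S : Subgroup A) : Subgroup G where
  carrier := {g | ∀ a ∈ S, a • g = g}
  one_mem' := fun a _ => smul_one a
  mul_mem' := fun {x y} hx hy a ha => by rw [smul_mul', hx a ha, hy a ha]
  inv_mem' := fun {x} hx a ha => by rw [smul_inv', hx a ha]

/-- `A` is a Frobenius group with kernel `F` and complement `H`:
`A = F ⋊ H` and `C_F(h) = 1` for every nontrivial `h ∈ H`. -/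
def IsFrobeniusGroupWith (A : Type*) [Group A] (F H : Subgroup A) : Prop :=
  F.Normal ∧ F ≠ ⊥ ∧ H ≠ ⊥ ∧ F ⊓ H = ⊥ ∧ F ⊔ H = ⊤ ∧
    ∀ h ∈ H, h ≠ 1 → ∀ f ∈ F, h * f * h⁻¹ = f → f = 1

section Auxiliary

variable {A : Type*} [Group A] {G : Type*} [Group G] [MulDistribMulAction A G]

/-- Action of `A` on an `A`-invariant subgroup. -/
def frobAux.subAction (N : Subgroup G) (hinv : ∀ (a : A), ∀ g ∈ N, a • g ∈ N) :
    MulDistribMulAction A ↥N where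
  smul a n := ⟨a • (n : G), hinv a n n.2⟩
  one_smul n := Subtype.ext (one_smul A (n : G))
  mul_smul a b n := Subtype.ext (mul_smul a b (n : G))
  smul_mul a n m := Subtype.ext (smul_mul' a (n : G) (m : G))
  smul_one a := Subtype.ext (smul_one a)

theorem frobAux.le_comap (N : Subgroup G) (hinv : ∀ (a : A), ∀ g ∈ N, a • g ∈ N) (a : A) :
    N ≤ N.comap (MulDistribMulAction.toMonoidHom G a) :=
  fun g hg => hinv a g hg

/-- Action of `A` on the quotient by an `A`-invariant normal subgroup. -/
def frobAux.quotAction (N : Subgroup G) [N.Normal] (hinv : ∀ (a : A), ∀ g ∈ N, a • g ∈ N) :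
    MulDistribMulAction A (G ⧸ N) where
  smul a := QuotientGroup.map N N (MulDistribMulAction.toMonoidHom G a)
    (frobAux.le_comap N hinv a)
  one_smul q := QuotientGroup.induction_on q (fun g => by
    show QuotientGroup.map N N _ _ _ = _
    rw [QuotientGroup.map_mk]
    simp)
  mul_smul a b q := QuotientGroup.induction_on q (fun g => by
    show QuotientGroup.map N N _ _ _ =
      QuotientGroup.map N N _ _ (QuotientGroup.map N N _ _ _)
    rw [QuotientGroup.map_mk, QuotientGroup.map_mk, QuotientGroup.map_mk]
    simp [mul_smul])
  smul_mul a q r := QuotientGroup.induction_on q (fun g =>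
    QuotientGroup.induction_on r (fun g' => by
      show QuotientGroup.map N N _ _ _ = QuotientGroup.map N N _ _ _ * QuotientGroup.map N N _ _ _
      rw [← QuotientGroup.mk_mul, QuotientGroup.map_mk, QuotientGroup.map_mk,
        QuotientGroup.map_mk, ← QuotientGroup.mk_mul]
      simp [smul_mul']))
  smul_one a := by
    show QuotientGroup.map N N _ _ (QuotientGroup.mk 1) = _
    rw [QuotientGroup.map_mk]
    simp

theorem frobAux.quotAction_mk (N : Subgroup G) [N.Normal]
    (hinv : ∀ (a : A), ∀ g ∈ N, a • g ∈ N) (a : A) (g : G) :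
    (frobAux.quotAction N hinv).toMulAction.toSMul.smul a (QuotientGroup.mk g) =
      (QuotientGroup.mk (a • g) : G ⧸ N) := by
  show QuotientGroup.map N N _ _ _ = _
  rw [QuotientGroup.map_mk]
  rfl

theorem frobAux.smul_mem_derivedSeries (a : A) (k : ℕ) {g : G}
    (hg : g ∈ derivedSeries G k) : a • g ∈ derivedSeries G k := by
  have hsurj : Function.Surjective (MulDistribMulAction.toMonoidHom G a) :=
    fun g => ⟨a⁻¹ • g, by simp⟩
  have h := map_derivedSeries_eq hsurj k
  rw [← h]
  exact ⟨g, hg, rfl⟩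

theorem frobAux.exists_last (j : ℕ) (hj : derivedSeries G j = ⊥)
    (h0 : derivedSeries G 0 ≠ ⊥) :
    ∃ i, derivedSeries G i ≠ ⊥ ∧ derivedSeries G (i + 1) = ⊥ := by
  induction j with
  | zero => exact absurd hj h0
  | succ j ihj =>
    by_cases hcase : derivedSeries G j = ⊥
    · exact ihj hcase
    · exact ⟨j, hcase, hj⟩

end Auxiliary

theorem frobAux.prod_smul_mem_fixed {A : Type*} [Group A] {W : Type*} [CommGroup W]
    [MulDistribMulAction A W] (S : Subgroup A) [Fintype ↥S] (w : W) :
    (∏ x : ↥S, (x : A) • w) ∈ fixedSubgroup A S := by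
  intro a ha
  rw [Finset.smul_prod']
  have h : ∀ x : ↥S, a • ((x : A) • w) = ((((⟨a, ha⟩ : ↥S) * x : ↥S) : A) • w) := by
    intro x; rw [smul_smul]; rfl
  rw [Fintype.prod_congr _ _ h]
  exact Equiv.prod_comp (Equiv.mulLeft (⟨a, ha⟩ : ↥S)) (fun x : ↥S => (x : A) • w)

/-- The abelian case: if `F ⋊ H` is Frobenius-like and acts on a finite commutative
group `W` coprimely with trivial `H`-fixed points, then `F` acts trivially. -/
theorem frobAux.abelian_case {A : Type*} [Group A] [Finite A] {F H : Subgroup A}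
    (hFn : F.Normal)
    (hfrob : ∀ h ∈ H, h ≠ 1 → ∀ f ∈ F, h * f * h⁻¹ = f → f = 1)
    (W : Type*) [CommGroup W] [Finite W] [MulDistribMulAction A W]
    (hcop : Nat.Coprime (Nat.card A) (Nat.card W))
    (hCH : fixedSubgroup A (G := W) H = ⊥) :
    fixedSubgroup A (G := W) F = ⊤ := by
  classical
  letI : Fintype ↥F := Fintype.ofFinite _
  letI : Fintype ↥H := Fintype.ofFinite _
  set sF : W → W := fun w => ∏ x : ↥F, (x : A) • w with hsF
  have hsFmem : ∀ w, sF w ∈ fixedSubgroup A (G := W) F := fun w => prod_smul_mem_fixed F w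
  have hsH : ∀ w : W, (∏ x : ↥H, (x : A) • w) = 1 := by
    intro w
    have h1 := prod_smul_mem_fixed H w
    rw [hCH, Subgroup.mem_bot] at h1
    exact h1
  have key : ∀ w : W, w ^ (Fintype.card ↥F) ∈ fixedSubgroup A (G := W) F := by
    intro w
    have E : (1 : W) =
        w ^ (Fintype.card ↥F) * ∏ h ∈ (univ.erase (1 : ↥H)), sF ((h : A) • w) := by
      calc (1 : W) = ∏ x : ↥F, ((x : A) • (∏ h : ↥H, ((h : A) • ((x : A)⁻¹ • w)))) := by
            simp [hsH]
        _ = ∏ x : ↥F, ∏ h : ↥H, ((x : A) * (h : A) * (x : A)⁻¹) • w := by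
            refine Fintype.prod_congr _ _ (fun x => ?_)
            rw [Finset.smul_prod']
            refine Fintype.prod_congr _ _ (fun h => ?_)
            rw [smul_smul, smul_smul, mul_assoc]
        _ = ∏ h : ↥H, ∏ x : ↥F, ((x : A) * (h : A) * (x : A)⁻¹) • w := Finset.prod_comm
        _ = (∏ x : ↥F, ((x : A) * ((1 : ↥H) : A) * (x : A)⁻¹) • w) *
              ∏ h ∈ (univ.erase (1 : ↥H)), ∏ x : ↥F, ((x : A) * (h : A) * (x : A)⁻¹) • w :=
            (Finset.mul_prod_erase univ _ (mem_univ 1)).symm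
        _ = w ^ (Fintype.card ↥F) * ∏ h ∈ (univ.erase (1 : ↥H)), sF ((h : A) • w) := by
            congr 1
            · have h : ∀ x : ↥F, ((x : A) * ((1 : ↥H) : A) * (x : A)⁻¹) • w = w := by
                intro x; simp
              rw [Fintype.prod_congr _ _ h, Finset.prod_const, card_univ]
            · refine Finset.prod_congr rfl (fun h hh => ?_)
              have hne : (h : A) ≠ 1 := by
                intro hc
                exact (Finset.mem_erase.mp hh).1 (by ext; simpa using hc)
              have hconj : ∀ x : ↥F, (h : A) * (x : A)⁻¹ * (h : A)⁻¹ ∈ F :=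
                fun x => hFn.conj_mem _ (inv_mem x.2) _
              set φ : ↥F → ↥F := fun x => ⟨(x : A) * ((h : A) * (x : A)⁻¹ * (h : A)⁻¹),
                mul_mem x.2 (hconj x)⟩ with hφ
              have hinj : Function.Injective φ := by
                intro x y hxy
                have hco : (x : A) * ((h : A) * (x : A)⁻¹ * (h : A)⁻¹) =
                    (y : A) * ((h : A) * (y : A)⁻¹ * (h : A)⁻¹) := congrArg Subtype.val hxy
                have h1 : (x : A) * (h : A) * (x : A)⁻¹ = (y : A) * (h : A) * (y : A)⁻¹ := by
                  have := congrArg (· * (h : A)) hco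
                  simpa [mul_assoc] using this
                have h2 : ((y : A)⁻¹ * (x : A)) * (h : A) = (h : A) * ((y : A)⁻¹ * (x : A)) := by
                  have := congrArg (fun z => (y : A)⁻¹ * z * (x : A)) h1
                  simpa [mul_assoc] using this
                have h3 : (h : A) * ((y : A)⁻¹ * (x : A)) * (h : A)⁻¹ =
                    (y : A)⁻¹ * (x : A) := by
                  rw [← h2, mul_assoc, mul_inv_cancel, mul_one]
                have h4 : (y : A)⁻¹ * (x : A) = 1 :=
                  hfrob (h : A) h.2 hne _ (mul_mem (inv_mem y.2) x.2) h3
                have h5 : (x : A) = (y : A) := by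
                  rw [← one_mul (x : A), ← mul_inv_cancel (y : A), mul_assoc, h4, mul_one]
                exact Subtype.ext h5
              have hbij : Function.Bijective φ := Finite.injective_iff_bijective.mp hinj
              have hre : ∀ x : ↥F, ((x : A) * (h : A) * (x : A)⁻¹) • w =
                  ((φ x : A) • ((h : A) • w)) := by
                intro x
                rw [smul_smul]
                congr 1
                show (x : A) * (h : A) * (x : A)⁻¹ =
                  (x : A) * ((h : A) * (x : A)⁻¹ * (h : A)⁻¹) * (h : A)
                group
              simp only [hsF]
              exact Fintype.prod_bijective φ hbij _ (fun y : ↥F => (y : A) • ((h : A) • w)) hre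
    have hP : (∏ h ∈ (univ.erase (1 : ↥H)), sF ((h : A) • w)) ∈ fixedSubgroup A (G := W) F :=
      Subgroup.prod_mem _ (fun h _ => hsFmem _)
    have hiq : w ^ (Fintype.card ↥F) =
        (∏ h ∈ (univ.erase (1 : ↥H)), sF ((h : A) • w))⁻¹ := by
      rw [eq_inv_iff_mul_eq_one]
      exact E.symm
    rw [hiq]
    exact inv_mem hP
  have hcF : Nat.Coprime (Fintype.card ↥F) (Nat.card W) := by
    rw [← Nat.card_eq_fintype_card]
    exact Nat.Coprime.coprime_dvd_left (Subgroup.card_subgroup_dvd_card F) hcop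
  have hsurj : Function.Surjective (fun w : W => w ^ (Fintype.card ↥F)) := by
    have hinj : Function.Injective ((powMonoidHom (Fintype.card ↥F) : W →* W)) := by
      rw [injective_iff_map_eq_one]
      intro x hx
      have h1 : orderOf x ∣ Fintype.card ↥F := orderOf_dvd_of_pow_eq_one hx
      have h2 : orderOf x ∣ Nat.card W := orderOf_dvd_natCard x
      have h3 := Nat.dvd_gcd h1 h2
      rw [Nat.Coprime.gcd_eq_one hcF] at h3
      exact orderOf_eq_one_iff.mp (Nat.dvd_one.mp h3)
    exact Finite.surjective_of_injective hinj
  rw [Subgroup.eq_top_iff']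
  intro w
  obtain ⟨v, rfl⟩ := hsurj w
  exact key v

/-- Fixed point on an `H`-invariant coset of an `A`-invariant abelian subgroup. -/
theorem frobAux.coset_lemma {A : Type*} [Group A] [Finite A] (H : Subgroup A)
    {G : Type*} [Group G] [Finite G] [MulDistribMulAction A G] (N : Subgroup G)
    (hinv : ∀ (a : A), ∀ g ∈ N, a • g ∈ N)
    (hab : ∀ x ∈ N, ∀ y ∈ N, x * y = y * x)
    (hcop : Nat.Coprime (Nat.card ↥H) (Nat.card ↥N))
    (g : G) (hg : ∀ h ∈ H, g⁻¹ * (h • g) ∈ N) :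
    ∃ n ∈ N, ∀ h ∈ H, h • (g * n) = g * n := by
  classical
  letI : Fintype ↥H := Fintype.ofFinite _
  letI cg : CommGroup ↥N :=
    { (inferInstance : Group ↥N) with
      mul_comm := fun a b => Subtype.ext (hab _ a.2 _ b.2) }
  letI act : MulDistribMulAction A ↥N := frobAux.subAction N hinv
  set c : ↥H → ↥N := fun h => ⟨g⁻¹ * ((h : A) • g), hg _ h.2⟩ with hc
  have hcoc : ∀ h₀ h₁ : ↥H, c (h₀ * h₁) = c h₀ * ((h₀ : A) • c h₁) := by
    intro h₀ h₁
    apply Subtype.ext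
    show g⁻¹ * (((h₀ : A) * (h₁ : A)) • g) =
      (g⁻¹ * ((h₀ : A) • g)) * ((h₀ : A) • (g⁻¹ * ((h₁ : A) • g)))
    rw [smul_mul', smul_inv', mul_smul]
    simp [mul_assoc]
  set d : ↥N := ∏ h : ↥H, c h with hd
  set e := Fintype.card ↥H with he
  have hdact : ∀ h₀ : ↥H, (h₀ : A) • d = ((c h₀) ^ e)⁻¹ * d := by
    intro h₀
    have h1 : ∏ h : ↥H, c (h₀ * h) = d := Equiv.prod_comp (Equiv.mulLeft h₀) c
    have h2 : ∏ h : ↥H, c (h₀ * h) = (c h₀) ^ e * ((h₀ : A) • d) := by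
      calc ∏ h : ↥H, c (h₀ * h) = ∏ h : ↥H, (c h₀ * ((h₀ : A) • c h)) :=
            Fintype.prod_congr _ _ (fun h => hcoc h₀ h)
        _ = (∏ _h : ↥H, c h₀) * ∏ h : ↥H, ((h₀ : A) • c h) := Finset.prod_mul_distrib
        _ = (c h₀) ^ e * ((h₀ : A) • d) := by
            rw [Finset.prod_const, card_univ, hd, Finset.smul_prod']
    rw [eq_inv_mul_iff_mul_eq]
    exact h2.symm.trans h1
  set n := Nat.card ↥N with hn
  set e' := e ^ (Nat.totient n - 1) with he'
  have hmod : e * e' ≡ 1 [MOD n] := by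
    have htpos : 0 < Nat.totient n := Nat.totient_pos.mpr Nat.card_pos
    have h1 : e * e' = e ^ Nat.totient n := by
      rw [he', ← pow_succ']
      congr 1
      omega
    rw [h1]
    refine Nat.ModEq.pow_totient ?_
    rw [he, ← Nat.card_eq_fintype_card]
    exact hcop
  have hpow : ∀ x : ↥N, x ^ (e * e') = x := by
    intro x
    have hx : x ^ (e * e') = x ^ 1 := by
      rw [pow_eq_pow_iff_modEq]
      exact Nat.ModEq.of_dvd (orderOf_dvd_natCard x) hmod
    simpa using hx
  set m := d ^ e' with hm
  have hmact : ∀ h₀ : ↥H, (h₀ : A) • m = (c h₀)⁻¹ * m := by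
    intro h₀
    rw [hm, smul_pow', hdact h₀, mul_pow, inv_pow, ← pow_mul, hpow]
  refine ⟨(m : G), m.2, ?_⟩
  intro h hh
  have h0 : h • g = g * ((c ⟨h, hh⟩ : ↥N) : G) := by
    show h • g = g * (g⁻¹ * (h • g))
    rw [mul_inv_cancel_left]
  have h1 : h • ((m : ↥N) : G) = (((c ⟨h, hh⟩)⁻¹ * m : ↥N) : G) :=
    congrArg Subtype.val (hmact ⟨h, hh⟩)
  have h2 : (((c ⟨h, hh⟩)⁻¹ * m : ↥N) : G) = ((c ⟨h, hh⟩ : ↥N) : G)⁻¹ * ((m : ↥N) : G) := rfl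
  rw [smul_mul', h0, h1, h2, mul_assoc, mul_inv_cancel_left]

universe u

/-- Main induction: under the Frobenius hypotheses with trivial `H`-fixed points,
the kernel `F` acts trivially on a finite solvable group. -/
theorem frobAux.main {A : Type*} [Group A] [Finite A] {F H : Subgroup A}
    (hFn : F.Normal)
    (hfrob : ∀ h ∈ H, h ≠ 1 → ∀ f ∈ F, h * f * h⁻¹ = f → f = 1) :
    ∀ (k : ℕ) (G : Type u) [Group G] [Finite G] [Group.IsSolvable G] [MulDistribMulAction A G],
      Nat.card G ≤ k → Nat.Coprime (Nat.card A) (Nat.card G) →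
      fixedSubgroup A (G := G) H = ⊥ → fixedSubgroup A (G := G) F = ⊤ := by
  intro k
  induction k with
  | zero =>
    intro G _ _ _ _ hle _ _
    have := Nat.card_pos (α := G)
    omega
  | succ k ih =>
    intro G _ _ _ _ hle hcop hCH
    rcases subsingleton_or_nontrivial G with hs | hnt
    · refine (Subgroup.eq_top_iff' _).mpr (fun g => fun a _ => Subsingleton.elim _ _)
    · obtain ⟨j, hj⟩ := Group.IsSolvable.solvable (G := G)
      have h0 : derivedSeries G 0 ≠ ⊥ := by
        rw [derivedSeries_zero]
        intro hcon
        obtain ⟨x, hx⟩ := exists_ne (1 : G)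
        have hx2 : x ∈ (⊥ : Subgroup G) := hcon ▸ Subgroup.mem_top x
        exact hx (by simpa using hx2)
      obtain ⟨i, hiNe, hisucc⟩ := frobAux.exists_last j hj h0
      set N := derivedSeries G i with hN
      haveI : N.Normal := derivedSeries_normal G i
      have hinv : ∀ (a : A), ∀ g ∈ N, a • g ∈ N :=
        fun a g hg => frobAux.smul_mem_derivedSeries a i hg
      have hab : ∀ x ∈ N, ∀ y ∈ N, x * y = y * x := by
        have hc : ⁅N, N⁆ = ⊥ := by rw [hN, ← derivedSeries_succ]; exact hisucc
        intro x hx y hy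
        have hle' := Subgroup.commutator_eq_bot_iff_le_centralizer.mp hc
        exact (Subgroup.mem_centralizer_iff.mp (hle' hx) y hy).symm
      have hcopN : Nat.Coprime (Nat.card A) (Nat.card ↥N) :=
        Nat.Coprime.coprime_dvd_right (Subgroup.card_subgroup_dvd_card N) hcop
      have hcopQ : Nat.Coprime (Nat.card A) (Nat.card (G ⧸ N)) :=
        Nat.Coprime.coprime_dvd_right (Subgroup.card_quotient_dvd_card N) hcop
      have hcopHN : Nat.Coprime (Nat.card ↥H) (Nat.card ↥N) :=
        Nat.Coprime.coprime_dvd_left (Subgroup.card_subgroup_dvd_card H) hcopN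
      letI qact : MulDistribMulAction A (G ⧸ N) := frobAux.quotAction N hinv
      have hCHQ : fixedSubgroup A (G := G ⧸ N) H = ⊥ := by
        rw [Subgroup.eq_bot_iff_forall]
        intro q hq
        obtain ⟨g, rfl⟩ := QuotientGroup.mk_surjective q
        have hgN : ∀ h ∈ H, g⁻¹ * (h • g) ∈ N := by
          intro h hh
          have h1 : (QuotientGroup.mk (h • g) : G ⧸ N) = QuotientGroup.mk g :=
            (frobAux.quotAction_mk N hinv h g).symm.trans (hq h hh)
          have h2 := QuotientGroup.eq.mp h1
          have h3 := inv_mem h2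
          simpa [mul_inv_rev] using h3
        obtain ⟨n0, hn0, hfix⟩ := frobAux.coset_lemma H N hinv hab hcopHN g hgN
        have hmem : g * n0 ∈ fixedSubgroup A (G := G) H := fun a ha => hfix a ha
        rw [hCH, Subgroup.mem_bot] at hmem
        have e1 : (QuotientGroup.mk (g * n0) : G ⧸ N) = 1 := by
          rw [hmem]; exact QuotientGroup.mk_one _
        have e2 : (QuotientGroup.mk n0 : G ⧸ N) = 1 := (QuotientGroup.eq_one_iff n0).mpr hn0
        have e3 : (QuotientGroup.mk g : G ⧸ N) * QuotientGroup.mk n0 = 1 := by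
          rw [← QuotientGroup.mk_mul]; exact e1
        rw [e2, mul_one] at e3
        exact e3
      have hcard : Nat.card (G ⧸ N) ≤ k := by
        have h1 : Nat.card G = Nat.card (G ⧸ N) * Nat.card ↥N :=
          Subgroup.card_eq_card_quotient_mul_card_subgroup N
        have h2 : 1 < Nat.card ↥N := (Subgroup.one_lt_card_iff_ne_bot N).mpr hiNe
        have h3 : 0 < Nat.card (G ⧸ N) := Nat.card_pos
        have h4 : Nat.card (G ⧸ N) * 2 ≤ Nat.card (G ⧸ N) * Nat.card ↥N :=
          Nat.mul_le_mul_left _ h2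
        omega
      have hQtop : fixedSubgroup A (G := G ⧸ N) F = ⊤ := ih (G ⧸ N) hcard hcopQ hCHQ
      letI cgN : CommGroup ↥N :=
        { (inferInstance : Group ↥N) with
          mul_comm := fun a b => Subtype.ext (hab _ a.2 _ b.2) }
      letI actN : MulDistribMulAction A ↥N := frobAux.subAction N hinv
      have hCHN : fixedSubgroup A (G := ↥N) H = ⊥ := by
        rw [Subgroup.eq_bot_iff_forall]
        intro x hx
        have hxm : (x : G) ∈ fixedSubgroup A (G := G) H := by
          intro a ha
          exact congrArg Subtype.val (hx a ha)
        rw [hCH, Subgroup.mem_bot] at hxm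
        exact Subtype.ext hxm
      have hNtop : fixedSubgroup A (G := ↥N) F = ⊤ :=
        frobAux.abelian_case hFn hfrob ↥N hcopN hCHN
      rw [Subgroup.eq_top_iff']
      intro g f hf
      have hmemN : g⁻¹ * (f • g) ∈ N := by
        have hq1 : (QuotientGroup.mk g : G ⧸ N) ∈ fixedSubgroup A (G := G ⧸ N) F := by
          rw [hQtop]; exact Subgroup.mem_top _
        have hq2 : (QuotientGroup.mk (f • g) : G ⧸ N) = QuotientGroup.mk g :=
          (frobAux.quotAction_mk N hinv f g).symm.trans (hq1 f hf)
        have h2 := QuotientGroup.eq.mp hq2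
        have h3 := inv_mem h2
        simpa [mul_inv_rev] using h3
      set nn : ↥N := ⟨g⁻¹ * (f • g), hmemN⟩ with hnn
      have hfixn : f • ((nn : ↥N) : G) = ((nn : ↥N) : G) := by
        have h1 : nn ∈ fixedSubgroup A (G := ↥N) F := by
          rw [hNtop]; exact Subgroup.mem_top _
        exact congrArg Subtype.val (h1 f hf)
      have hgn : f • g = g * ((nn : ↥N) : G) := by
        show f • g = g * (g⁻¹ * (f • g))
        rw [mul_inv_cancel_left]
      have hiter : ∀ t : ℕ, f ^ t • g = g * ((nn : ↥N) : G) ^ t := by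
        intro t
        induction t with
        | zero => simp
        | succ t iht =>
          rw [pow_succ', mul_smul, iht, smul_mul', smul_pow', hfixn, hgn, mul_assoc,
            ← pow_succ']
      have hord : ((nn : ↥N) : G) ^ (orderOf f) = 1 := by
        have h1 := hiter (orderOf f)
        rw [pow_orderOf_eq_one, one_smul] at h1
        exact (left_eq_mul.mp h1)
      have hdvd1 : orderOf ((nn : ↥N) : G) ∣ orderOf f := orderOf_dvd_of_pow_eq_one hord
      have hdvd2 : orderOf f ∣ Nat.card A := orderOf_dvd_natCard f
      have hdvd3 : orderOf ((nn : ↥N) : G) ∣ Nat.card G := orderOf_dvd_natCard _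
      have hone : orderOf ((nn : ↥N) : G) ∣ 1 := by
        rw [← Nat.Coprime.gcd_eq_one hcop]
        exact Nat.dvd_gcd (hdvd1.trans hdvd2) hdvd3
      have hnn1 : ((nn : ↥N) : G) = 1 := orderOf_eq_one_iff.mp (Nat.dvd_one.mp hone)
      rw [hgn, hnn1, mul_one]

/-- If the Frobenius group `A = FH` acts coprimely on the finite solvable group `G`
with `C_G(H) = 1`, then `[G, F] = 1` (i.e. `F` acts trivially), so `|G| = |C_G(F)|`. -/
theorem kernel_acts_trivially_of_fixedH_trivial
    (A : Type*) [Group A] [Finite A] (F H : Subgroup A) (hA : IsFrobeniusGroupWith A F H)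
    (G : Type*) [Group G] [Finite G] [Group.IsSolvable G] [MulDistribMulAction A G]
    (hcop : Nat.Coprime (Nat.card A) (Nat.card G))
    (hCH : fixedSubgroup A (G := G) H = ⊥) :
    fixedSubgroup A (G := G) F = ⊤ ∧
      Nat.card G = Nat.card ↥(fixedSubgroup A (G := G) F) := by
  obtain ⟨hFn, -, -, -, -, hfrob⟩ := hA
  have h1 : fixedSubgroup A (G := G) F = ⊤ :=
    frobAux.main hFn hfrob (Nat.card G) G le_rfl hcop hCH
  refine ⟨h1, ?_⟩
  rw [h1]
  exact (Nat.card_congr Subgroup.topEquiv.toEquiv).symm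
end

section
/- Let G be a finite solvable group with an F-chain P₁, …, P_n of length n equal to the Fitting length f(G) = n, where P_n = C_n (so D_n = 1). Then C_n ≤ F(G). -/
open Subgroup
open scoped commutatorElement

/-- An `𝓕`-chain of length `ℓ` in `G`: sections `P i = C i / D i` with each `P i` a
nontrivial statement-free `p i`-group, consecutive primes distinct, the last `D`
trivial, `D i` centralizing the next section, and `[P i, P (i+1)] = P (i+1)`. -/
structure IsFChain (G : Type*) [Group G] (ℓ : ℕ) (p : Fin ℓ → ℕ)
    (C D : Fin ℓ → Subgroup G) : Prop where
  le : ∀ i, D i ≤ C i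
  normal : ∀ i, ((D i).subgroupOf (C i)).Normal
  prime : ∀ i, (p i).Prime
  pgroup : ∀ i, IsPGroup (p i) (↥(C i) ⧸ (D i).subgroupOf (C i))
  p_ne : ∀ i : Fin ℓ, (h : i.1 + 1 < ℓ) → p i ≠ p ⟨i.1 + 1, h⟩
  d_last : ∀ h : 0 < ℓ, D ⟨ℓ - 1, by omega⟩ = ⊥
  norm_next : ∀ i : Fin ℓ, (h : i.1 + 1 < ℓ) →
    C i ≤ Subgroup.normalizer (C ⟨i.1 + 1, h⟩ : Set G) ∧ C i ≤ Subgroup.normalizer (D ⟨i.1 + 1, h⟩ : Set G)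
  cent_next : ∀ i : Fin ℓ, (h : i.1 + 1 < ℓ) →
    ∀ d ∈ D i, ∀ c ∈ C ⟨i.1 + 1, h⟩, ⁅d, c⁆ ∈ D ⟨i.1 + 1, h⟩
  comm_next : ∀ i : Fin ℓ, (h : i.1 + 1 < ℓ) →
    ⁅C i, C ⟨i.1 + 1, h⟩⁆ ⊔ D ⟨i.1 + 1, h⟩ = C ⟨i.1 + 1, h⟩


open Pointwise

namespace FChainAux

variable {H : Type*} [Group H]


variable {H : Type*} [Group H]

/-- Bezout-style membership: if two coprime powers of `z` lie in `K`, so does `z`. -/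
theorem mem_of_pow_mem {K : Subgroup H} {z : H} {s t : ℕ} (hs : z ^ s ∈ K) (ht : z ^ t ∈ K)
    (hst : Nat.Coprime s t) : z ∈ K := by
  have hb := Nat.gcd_eq_gcd_ab s t
  rw [hst] at hb
  have h1 : (1 : ℤ) = (s : ℤ) * Nat.gcdA s t + (t : ℤ) * Nat.gcdB s t := by exact_mod_cast hb
  have : z = (z ^ s) ^ Nat.gcdA s t * (z ^ t) ^ Nat.gcdB s t := by
    rw [← zpow_natCast z s, ← zpow_natCast z t, ← zpow_mul, ← zpow_mul, ← zpow_add, ← h1, zpow_one]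
  rw [this]
  exact mul_mem (K.zpow_mem hs _) (K.zpow_mem ht _)

theorem mem_zpowers_mul_left {u w : H} (h : Commute u w)
    (hc : Nat.Coprime (orderOf u) (orderOf w)) : u ∈ Subgroup.zpowers (u * w) := by
  obtain ⟨t, ht1, ht2⟩ := Nat.chineseRemainder hc 1 0
  have h1 : (u * w) ^ t = u ^ t * w ^ t := h.mul_pow t
  have h2 : u ^ t = u ^ 1 := pow_eq_pow_iff_modEq.mpr ht1
  have h3 : w ^ t = w ^ 0 := pow_eq_pow_iff_modEq.mpr ht2
  rw [h2, h3, pow_one, pow_zero, mul_one] at h1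
  refine Subgroup.mem_zpowers_iff.mpr ⟨(t : ℤ), ?_⟩
  rw [zpow_natCast]; exact h1

theorem normal_sSup {S : Set (Subgroup H)} (hS : ∀ K ∈ S, K.Normal) : (sSup S).Normal := by
  constructor
  intro n hn g
  rw [sSup_eq_iSup', iSup_eq_closure] at hn ⊢
  induction hn using closure_induction with
  | mem x hx =>
    obtain ⟨s, ⟨K, rfl⟩, hxs⟩ := hx
    exact subset_closure (Set.mem_iUnion.mpr ⟨K, (hS K K.2).conj_mem x hxs g⟩)
  | one => simpa using one_mem _
  | mul x y hx hy ihx ihy =>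
    have : g * (x * y) * g⁻¹ = (g * x * g⁻¹) * (g * y * g⁻¹) := by group
    rw [this]; exact mul_mem ihx ihy
  | inv x hx ihx =>
    have : g * x⁻¹ * g⁻¹ = (g * x * g⁻¹)⁻¹ := by group
    rw [this]; exact inv_mem ihx

/-- `O_p(H)`: the join of all normal `p`-subgroups. -/
def pRad (p : ℕ) (H : Type*) [Group H] : Subgroup H :=
  sSup {K : Subgroup H | K.Normal ∧ IsPGroup p K}

theorem pRad_normal (p : ℕ) : (pRad p H).Normal :=
  normal_sSup fun _ hK => hK.1

theorem le_pRad {p : ℕ} {K : Subgroup H} (h1 : K.Normal) (h2 : IsPGroup p K) :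
    K ≤ pRad p H :=
  le_sSup ⟨h1, h2⟩

theorem pRad_pgroup [Finite H] (p : ℕ) : IsPGroup p (pRad p H) := by
  classical
  set S : Set (Subgroup H) := {K : Subgroup H | K.Normal ∧ IsPGroup p K} with hSdef
  have hfin : S.Finite := Set.toFinite S
  have hne : S.Nonempty := ⟨⊥, inferInstance, IsPGroup.of_bot⟩
  obtain ⟨U, hU, hmax'⟩ := Set.Finite.exists_maximalFor id S hfin hne
  have hmax : ∀ a ∈ S, id U ≤ id a → id U = id a := fun a ha h => le_antisymm h (hmax' ha h)
  have hall : ∀ K ∈ S, K ≤ U := by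
    intro K hK
    haveI := hU.1
    haveI := hK.1
    have hsup : K ⊔ U ∈ S := ⟨inferInstance, IsPGroup.to_sup_of_normal_right hK.2 hU.2⟩
    have := hmax _ hsup (le_sup_right : id U ≤ id (K ⊔ U))
    simp only [id] at this
    calc K ≤ K ⊔ U := le_sup_left
      _ = U := this.symm
  have : pRad p H = U := le_antisymm (sSup_le hall) (le_sSup hU)
  rw [this]; exact hU.2

theorem pRad_commute [Finite H] {p q : ℕ} (hp : p.Prime) (hq : q.Prime) (hpq : p ≠ q)
    {x y : H} (hx : x ∈ pRad p H) (hy : y ∈ pRad q H) : Commute x y := by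
  haveI := Fact.mk hp
  haveI := Fact.mk hq
  exact Subgroup.commute_of_normal_of_disjoint _ _ (pRad_normal p) (pRad_normal q)
    (IsPGroup.disjoint_of_ne p q hpq _ _ (pRad_pgroup p) (pRad_pgroup q)) x y hx hy





theorem fitting_normal : (FittingSubgroup H).Normal :=
  normal_sSup fun _ hK => hK.1

/-- join of the `pRad`s over a finset of primes -/
def sJoin (t : Finset ℕ) (H : Type*) [Group H] : Subgroup H :=
  sSup ((fun q => pRad q H) '' ↑t)

theorem sJoin_normal (t : Finset ℕ) : (sJoin t H).Normal := by
  refine normal_sSup ?_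
  rintro K ⟨q, -, rfl⟩
  exact pRad_normal q

theorem pRad_le_sJoin {t : Finset ℕ} {q : ℕ} (hq : q ∈ t) : pRad q H ≤ sJoin t H :=
  le_sSup ⟨q, hq, rfl⟩

theorem sJoin_insert (q : ℕ) (t : Finset ℕ) :
    sJoin (insert q t) H = pRad q H ⊔ sJoin t H := by
  classical
  unfold sJoin
  rw [Finset.coe_insert, Set.image_insert_eq, sSup_insert]

theorem sJoin_facts [Finite H] {p : ℕ} (hp : p.Prime) (t : Finset ℕ)
    (ht : ∀ q ∈ t, q.Prime ∧ q ≠ p) :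
    ∀ f ∈ sJoin t H, (orderOf f).Coprime p ∧ ∀ y ∈ pRad p H, Commute f y := by
  classical
  revert ht
  induction t using Finset.induction_on with
  | empty =>
    intro ht f hf
    have : sJoin (∅ : Finset ℕ) H = ⊥ := by
      unfold sJoin; simp
    rw [this, Subgroup.mem_bot] at hf
    subst hf
    simp [Nat.coprime_one_left, Commute.one_left]
  | @insert q t hqt ih =>
    intro ht f hf
    rw [sJoin_insert] at hf
    haveI := sJoin_normal (H := H) t
    have hq := ht q (Finset.mem_insert_self q t)
    have ht' : ∀ r ∈ t, r.Prime ∧ r ≠ p := fun r hr => ht r (Finset.mem_insert_of_mem hr)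
    -- decompose f = a * g
    have hdecomp : f ∈ (pRad q H : Set H) * (sJoin t H : Set H) := by
      rw [← Subgroup.mul_normal]; exact hf
    obtain ⟨a, ha, g, hg, rfl⟩ := hdecomp
    obtain ⟨hgcop, hgcomm⟩ := ih ht' g hg
    -- a has q-power order
    obtain ⟨k, hk⟩ := pRad_pgroup (H := H) q ⟨a, ha⟩
    have hak : a ^ q ^ k = 1 := by exact_mod_cast congrArg (Subgroup.subtype _) hk
    have haord : orderOf a ∣ q ^ k := orderOf_dvd_of_pow_eq_one hak
    have hacop : (orderOf a).Coprime p :=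
      Nat.Coprime.coprime_dvd_left haord
        (Nat.Coprime.pow_left _ ((Nat.coprime_primes hq.1 hp).mpr hq.2))
    -- a commutes with g
    have hcent : sJoin t H ≤ Subgroup.centralizer (pRad q H : Set H) := by
      refine sSup_le ?_
      rintro K ⟨r, hr, rfl⟩
      intro x hx
      rw [Subgroup.mem_centralizer_iff]
      intro y hy
      have hrq : r ≠ q := fun hrq => hqt (hrq ▸ hr)
      exact (pRad_commute (ht' r hr).1 hq.1 hrq hx hy).symm
    have hag : Commute a g := (Subgroup.mem_centralizer_iff.mp (hcent hg)) a ha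
    constructor
    · refine Nat.Coprime.coprime_dvd_left (hag.orderOf_mul_dvd_mul_orderOf) ?_
      exact Nat.Coprime.mul hacop hgcop
    · intro y hy
      exact Commute.mul_left (pRad_commute hq.1 hp hq.2 ha hy) (hgcomm y hy)

theorem fitting_decomp [Finite H] {p : ℕ} (hp : p.Prime) :
    ∀ f ∈ FittingSubgroup H, ∃ u w : H, u ∈ pRad p H ∧ f = u * w ∧
      u ∈ Subgroup.zpowers f ∧ w ∈ Subgroup.zpowers f ∧ (orderOf w).Coprime p := by
  classical
  set s : Finset ℕ := (Nat.card H).primeFactors.erase p with hs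
  have hsprime : ∀ q ∈ s, q.Prime ∧ q ≠ p := by
    intro q hq
    rw [hs, Finset.mem_erase] at hq
    exact ⟨Nat.prime_of_mem_primeFactors hq.2, hq.1⟩
  have hFE : FittingSubgroup H ≤ pRad p H ⊔ sJoin s H := by
    refine sSup_le ?_
    rintro N ⟨hNnorm, hNnil⟩
    haveI := hNnorm
    -- mapped Sylow subgroups
    have key : ∀ q ∈ (Nat.card ↥N).primeFactors, ∃ K : Subgroup H, K ≤ N ⊓ (pRad p H ⊔ sJoin s H) ∧
        Nat.card K = q ^ (Nat.card ↥N).factorization q := by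
      intro q hq
      haveI : Fact q.Prime := ⟨Nat.prime_of_mem_primeFactors hq⟩
      have P : Sylow q ↥N := default
      have hPnorm : (P : Subgroup ↥N).Normal := by
        have := ((isNilpotent_of_finite_tfae (G := ↥N)).out 0 3).mp hNnil
        exact this q ⟨Nat.prime_of_mem_primeFactors hq⟩ P
      haveI : (P : Subgroup ↥N).Characteristic := Sylow.characteristic_of_normal P hPnorm
      have hmapnorm : ((P : Subgroup ↥N).map N.subtype).Normal := inferInstance
      have hmappg : IsPGroup q ((P : Subgroup ↥N).map N.subtype) := P.isPGroup'.map _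
      have hle : (P : Subgroup ↥N).map N.subtype ≤ pRad q H := le_pRad hmapnorm hmappg
      refine ⟨(P : Subgroup ↥N).map N.subtype, le_inf (map_subtype_le _) ?_, ?_⟩
      · by_cases hqp : q = p
        · subst hqp; exact hle.trans le_sup_left
        · refine hle.trans (le_trans (pRad_le_sJoin ?_) le_sup_right)
          rw [hs, Finset.mem_erase]
          refine ⟨hqp, Nat.primeFactors_mono ?_ ?_ hq⟩
          · exact Subgroup.card_subgroup_dvd_card N
          · exact Nat.card_pos.ne'
      · rw [← Sylow.card_eq_multiplicity P]
        exact (Nat.card_congr (Subgroup.equivMapOfInjective _ _ N.subtype_injective).toEquiv).symm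
    set J : Subgroup H := N ⊓ (pRad p H ⊔ sJoin s H) with hJ
    have hJle : J ≤ N := inf_le_left
    have hcard : Nat.card ↥N ∣ Nat.card ↥J := by
      rw [← Nat.factorization_le_iff_dvd Nat.card_pos.ne' Nat.card_pos.ne']
      intro q
      by_cases hq : q ∈ (Nat.card ↥N).primeFactors
      · obtain ⟨K, hKle, hKcard⟩ := key q hq
        have : q ^ (Nat.card ↥N).factorization q ∣ Nat.card ↥J := by
          rw [← hKcard]; exact Subgroup.card_dvd_of_le hKle
        exact ((Nat.prime_of_mem_primeFactors hq).pow_dvd_iff_le_factorization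
          Nat.card_pos.ne').mp this
      · have : (Nat.card ↥N).factorization q = 0 := by
          rw [← Nat.support_factorization] at hq
          exact Finsupp.notMem_support_iff.mp hq
        simp [this]
    have hJN : J = N := by
      refine Subgroup.eq_of_le_of_card_ge hJle ?_
      exact Nat.le_of_dvd Nat.card_pos hcard
    rw [← hJN]
    exact inf_le_right
  intro f hf
  have hf' := hFE hf
  haveI := sJoin_normal (H := H) s
  have hdec : f ∈ (pRad p H : Set H) * (sJoin s H : Set H) := by
    rw [← Subgroup.mul_normal]; exact hf'
  obtain ⟨u, hu, w, hw, hfw⟩ := hdec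
  obtain ⟨hwcop, hwcomm⟩ := sJoin_facts hp s hsprime w hw
  have huw : Commute u w := (hwcomm u hu).symm
  obtain ⟨k, hk⟩ := pRad_pgroup (H := H) p ⟨u, hu⟩
  have huk : u ^ p ^ k = 1 := by exact_mod_cast congrArg (Subgroup.subtype _) hk
  have huord : orderOf u ∣ p ^ k := orderOf_dvd_of_pow_eq_one huk
  have hcop : Nat.Coprime (orderOf u) (orderOf w) :=
    Nat.Coprime.coprime_dvd_left huord (Nat.Coprime.pow_left _ hwcop.symm)
  refine ⟨u, w, hu, hfw.symm, ?_, ?_, hwcop⟩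
  · rw [← hfw]; exact mem_zpowers_mul_left huw hcop
  · rw [← hfw]
    have hzw : w ∈ Subgroup.zpowers (w * u) := mem_zpowers_mul_left huw.symm hcop.symm
    rwa [← huw.eq] at hzw





theorem conj_mem_of_mem_normalizer {K : Subgroup H} {m y : H} (hm : m ∈ Subgroup.normalizer (K : Set _))
    (hy : y ∈ K) : m * y * m⁻¹ ∈ K :=
  (Subgroup.mem_normalizer_iff.mp hm y).mp hy

theorem conj_mem_of_mem_normalizer' {K : Subgroup H} {m y : H} (hm : m ∈ Subgroup.normalizer (K : Set _))
    (hy : y ∈ K) : m⁻¹ * y * m ∈ K := by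
  have := (Subgroup.mem_normalizer_iff.mp (inv_mem hm) y).mp hy
  rwa [inv_inv] at this

/-- the subgroup of elements of `N(c') ⊓ N(d')` whose commutators with `c'` land in `d'`. -/
def wt (c' d' : Subgroup H) : Subgroup H where
  carrier := {m | m ∈ Subgroup.normalizer (c' : Set _) ⊓ Subgroup.normalizer (d' : Set _) ∧ ∀ y ∈ c', ⁅m, y⁆ ∈ d'}
  one_mem' := by
    refine ⟨one_mem _, fun y hy => ?_⟩
    have h1 : ⁅(1 : H), y⁆ = 1 := by group
    rw [h1]; exact one_mem d'
  mul_mem' := by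
    rintro a b ⟨haM, ha⟩ ⟨hbM, hb⟩
    refine ⟨mul_mem haM hbM, fun y hy => ?_⟩
    have key : ⁅a * b, y⁆ = (a * ⁅b, y⁆ * a⁻¹) * ⁅a, y⁆ := by
      simp only [commutatorElement_def]; group
    rw [key]
    exact mul_mem (conj_mem_of_mem_normalizer haM.2 (hb y hy)) (ha y hy)
  inv_mem' := by
    rintro a ⟨haM, ha⟩
    refine ⟨inv_mem haM, fun y hy => ?_⟩
    have hy' : a⁻¹ * y * a ∈ c' := conj_mem_of_mem_normalizer' haM.1 hy
    have key : ⁅a⁻¹, y⁆ = (⁅a, a⁻¹ * y * a⁆)⁻¹ := by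
      simp only [commutatorElement_def]; group
    rw [key]
    exact inv_mem (ha _ hy')

theorem mem_wt {c' d' : Subgroup H} {m : H} :
    m ∈ wt c' d' ↔ m ∈ Subgroup.normalizer (c' : Set _) ⊓ Subgroup.normalizer (d' : Set _) ∧ ∀ y ∈ c', ⁅m, y⁆ ∈ d' :=
  Iff.rfl

theorem wt_subgroupOf_normal (c' d' : Subgroup H) :
    ((wt c' d').subgroupOf (Subgroup.normalizer (c' : Set _) ⊓ Subgroup.normalizer (d' : Set _))).Normal := by
  constructor
  intro n hn g
  rw [Subgroup.mem_subgroupOf] at hn ⊢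
  obtain ⟨-, hn2⟩ := hn
  have hgM := g.2
  have hgM' : ((g : H))⁻¹ ∈ Subgroup.normalizer (c' : Set _) ⊓ Subgroup.normalizer (d' : Set _) := inv_mem hgM
  refine ⟨?_, fun y hy => ?_⟩
  · push_cast
    exact mul_mem (mul_mem hgM n.2) hgM'
  · have hy' : (g : H)⁻¹ * y * g ∈ c' := conj_mem_of_mem_normalizer' hgM.1 hy
    have key : ⁅((g * n * g⁻¹ : _) : H), y⁆ =
        (g : H) * ⁅(n : H), (g : H)⁻¹ * y * g⁆ * (g : H)⁻¹ := by
      push_cast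
      simp only [commutatorElement_def]; group
    rw [key]
    exact conj_mem_of_mem_normalizer hgM.2 (hn2 _ hy')

theorem core {p q : ℕ} (hp : p.Prime) (hq : q.Prime) (hpq : p ≠ q)
    {c d c' d' F U : Subgroup H} (hdc : d ≤ c)
    (h3 : c ≤ Subgroup.normalizer (c' : Set _)) (h4 : c ≤ Subgroup.normalizer (d' : Set _)) (h4' : c' ≤ Subgroup.normalizer (d' : Set _))
    (h5 : ∀ x ∈ d, ∀ y ∈ c', ⁅x, y⁆ ∈ d')
    (h6 : ⁅c, c'⁆ ⊔ d' = c')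
    (h7 : ∀ x ∈ c, ∃ m, x ^ p ^ m ∈ d)
    (h8 : ∀ y ∈ c', ∃ m, y ^ q ^ m ∈ d')
    (hFn : F.Normal) (hUn : U.Normal) (hUp : IsPGroup p U)
    (hcF : c ≤ d ⊔ F)
    (hdec : ∀ f ∈ F, ∃ u w : H, u ∈ U ∧ f = u * w ∧ u ∈ Subgroup.zpowers f ∧
      w ∈ Subgroup.zpowers f ∧ (orderOf w).Coprime p) :
    c' ≤ d' := by
  haveI := hFn
  set M : Subgroup H := Subgroup.normalizer (c' : Set _) ⊓ Subgroup.normalizer (d' : Set _) with hMdef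
  have hcM : c ≤ M := le_inf h3 h4
  have hdWt : ∀ x ∈ d, x ∈ wt c' d' := fun x hx =>
    mem_wt.mpr ⟨hcM (hdc hx), h5 x hx⟩
  haveI := wt_subgroupOf_normal c' d'
  have hppq : ∀ a b : ℕ, Nat.Coprime (p ^ a) (q ^ b) := fun a b =>
    Nat.Coprime.pow a b ((Nat.coprime_primes hp hq).mpr hpq)
  -- main claim : c ≤ wt c' d'
  have hcWt : ∀ x ∈ c, x ∈ wt c' d' := by
    intro x hx
    have hxdF : x ∈ (d : Set H) * (F : Set H) := by
      rw [← Subgroup.mul_normal]; exact hcF hx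
    obtain ⟨e, he, f, hf, hef0⟩ := hxdF
    have hef : e * f = x := hef0
    obtain ⟨u, w, huU, hfuw, huzp, hwzp, hwcop⟩ := hdec f hf
    have hfM : f ∈ M := by
      have hfe : f = e⁻¹ * x := by rw [← hef]; group
      rw [hfe]
      exact mul_mem (inv_mem (hcM (hdc he))) (hcM hx)
    have hzpM : Subgroup.zpowers f ≤ M := Subgroup.zpowers_le.mpr hfM
    have huM : u ∈ M := hzpM huzp
    have hwM : w ∈ M := hzpM hwzp
    have heWt : e ∈ wt c' d' := hdWt e he
    have huWt : u ∈ wt c' d' := by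
      refine mem_wt.mpr ⟨huM, fun y hy => ?_⟩
      set z := ⁅u, y⁆ with hz
      have hzU : z ∈ U := by
        have h1 : z = u * (y * u⁻¹ * y⁻¹) := by
          rw [hz]; simp only [commutatorElement_def]; group
        have h2 : y * u⁻¹ * y⁻¹ ∈ U := hUn.conj_mem u⁻¹ (inv_mem huU) y
        rw [h1]; exact mul_mem huU h2
      have hzc' : z ∈ c' := by
        have h1 : z = (u * y * u⁻¹) * y⁻¹ := by
          rw [hz, commutatorElement_def]
        have h2 : u * y * u⁻¹ ∈ c' := conj_mem_of_mem_normalizer huM.1 hy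
        rw [h1]; exact mul_mem h2 (inv_mem hy)
      obtain ⟨k, hk⟩ := hUp ⟨z, hzU⟩
      have hzp1 : z ^ p ^ k = 1 := by exact_mod_cast congrArg (Subgroup.subtype _) hk
      obtain ⟨b, hb⟩ := h8 z hzc'
      have hz1 : z ^ p ^ k ∈ d' := by rw [hzp1]; exact one_mem d'
      exact mem_of_pow_mem hz1 hb (hppq k b)
    have hwWt : w ∈ wt c' d' := by
      set ρ := QuotientGroup.mk' ((wt c' d').subgroupOf M) with hρ
      have hker : ∀ a : M, ρ a = 1 ↔ (a : H) ∈ wt c' d' := by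
        intro a
        rw [← MonoidHom.mem_ker, QuotientGroup.ker_mk']
        exact Subgroup.mem_subgroupOf
      set xM : M := ⟨x, hcM hx⟩
      set eM : M := ⟨e, hcM (hdc he)⟩
      set uM : M := ⟨u, huM⟩
      set wM : M := ⟨w, hwM⟩
      have hxeuw : xM = eM * (uM * wM) := by
        apply Subtype.ext
        push_cast
        rw [← hfuw, hef]
      have h9 : ρ xM = ρ wM := by
        rw [hxeuw, map_mul, map_mul, (hker eM).mpr heWt, (hker uM).mpr huWt, one_mul, one_mul]
      obtain ⟨m, hm⟩ := h7 x hx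
      have hx1 : (ρ xM) ^ p ^ m = 1 := by
        rw [← map_pow]
        apply (hker _).mpr
        have : ((xM ^ p ^ m : M) : H) = x ^ p ^ m := by push_cast; rfl
        rw [this]
        exact hdWt _ hm
      have hw1 : (ρ wM) ^ p ^ m = 1 := by rw [← h9]; exact hx1
      have hword : orderOf (ρ wM) ∣ orderOf w := by
        refine dvd_trans (orderOf_map_dvd ρ wM) ?_
        have : orderOf ((wM : H)) = orderOf wM := orderOf_submonoid wM
        rw [← this]
      have hd1 : orderOf (ρ wM) ∣ p ^ m := orderOf_dvd_of_pow_eq_one hw1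
      have hcopm : Nat.Coprime (p ^ m) (orderOf w) := Nat.Coprime.pow_left m hwcop.symm
      have h11 : Nat.gcd (p ^ m) (orderOf w) = 1 := hcopm
      have hdvd : orderOf (ρ wM) ∣ 1 := h11 ▸ Nat.dvd_gcd hd1 hword
      have hwone : ρ wM = 1 := orderOf_eq_one_iff.mp (Nat.eq_one_of_dvd_one hdvd)
      exact (hker wM).mp hwone
    have hxW : x ∈ wt c' d' := by
      have : x = e * (u * w) := by rw [← hfuw, hef]
      rw [this]
      exact mul_mem heWt (mul_mem huWt hwWt)
    exact hxW
  rw [← h6]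
  refine sup_le ?_ le_rfl
  exact Subgroup.commutator_le.mpr fun x hx y hy => (mem_wt.mp (hcWt x hx)).2 y hy





theorem mem_normalizer_map {G G' : Type*} [Group G] [Group G'] (π : G →* G')
    {B : Subgroup G} {x : G} (hx : x ∈ Subgroup.normalizer (B : Set _)) :
    π x ∈ Subgroup.normalizer ((Subgroup.map π B) : Set _) := by
  have oneway : ∀ z ∈ Subgroup.normalizer (B : Set _), ∀ g ∈ Subgroup.map π B, π z * g * (π z)⁻¹ ∈
      Subgroup.map π B := by
    rintro z hz _ ⟨b, hb, rfl⟩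
    refine ⟨z * b * z⁻¹, (Subgroup.mem_normalizer_iff.mp hz b).mp hb, ?_⟩
    simp [map_mul]
  rw [Subgroup.mem_normalizer_iff]
  intro g
  constructor
  · intro hg; exact oneway x hx g hg
  · intro hg
    have := oneway x⁻¹ (inv_mem hx) _ hg
    simp only [map_inv, inv_inv] at this
    have heq : (π x)⁻¹ * (π x * g * (π x)⁻¹) * π x = g := by group
    rwa [heq] at this

theorem map_le_normalizer_map {G G' : Type*} [Group G] [Group G'] (π : G →* G')
    {A B : Subgroup G} (h : A ≤ Subgroup.normalizer (B : Set _)) :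
    Subgroup.map π A ≤ Subgroup.normalizer ((Subgroup.map π B) : Set _) := by
  rintro _ ⟨x, hx, rfl⟩
  exact mem_normalizer_map π (h hx)

theorem fittingSeries_normal (G : Type*) [Group G] (k : ℕ) : (FittingSeries G k).Normal := by
  induction k with
  | zero =>
    rw [show FittingSeries G 0 = (⊥ : Subgroup G) from rfl]
    infer_instance
  | succ k _ => exact Subgroup.Normal.comap fitting_normal _

theorem fittingSeries_mono (G : Type*) [Group G] (k : ℕ) :
    FittingSeries G k ≤ FittingSeries G (k + 1) := by
  intro x hx
  haveI := fittingSeries_normal G k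
  have hxc : x ∈ (FittingSeries G k).normalCore := by
    rwa [Subgroup.normalCore_eq_self]
  show QuotientGroup.mk' _ x ∈ FittingSubgroup _
  have : QuotientGroup.mk' (FittingSeries G k).normalCore x = 1 := by
    rw [← MonoidHom.mem_ker, QuotientGroup.ker_mk']
    exact hxc
  rw [this]
  exact one_mem _

theorem step {G : Type*} [Group G] [Finite G] {p q : ℕ} (hp : p.Prime) (hq : q.Prime)
    (hpq : p ≠ q) {Ci Di Cj Dj : Subgroup G} {k : ℕ}
    (hDC : Di ≤ Ci) (hDC' : Dj ≤ Cj)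
    (hCN : Ci ≤ Subgroup.normalizer (Cj : Set _)) (hCN' : Ci ≤ Subgroup.normalizer (Dj : Set _)) (hCjN : Cj ≤ Subgroup.normalizer (Dj : Set _))
    (hcent : ∀ x ∈ Di, ∀ y ∈ Cj, ⁅x, y⁆ ∈ Dj)
    (hcomm : ⁅Ci, Cj⁆ ⊔ Dj = Cj)
    (hCip : ∀ x ∈ Ci, ∃ m, x ^ p ^ m ∈ Di)
    (hCjq : ∀ y ∈ Cj, ∃ m, y ^ q ^ m ∈ Dj)
    (hstep : Ci ≤ Di ⊔ FittingSeries G (k + 1)) :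
    Cj ≤ Dj ⊔ FittingSeries G k := by
  set Nc := (FittingSeries G k).normalCore with hNc
  set π := QuotientGroup.mk' Nc with hπ
  have hsurj : Function.Surjective π := QuotientGroup.mk'_surjective Nc
  have hFk1 : FittingSeries G (k + 1) = Subgroup.comap π (FittingSubgroup (G ⧸ Nc)) := rfl
  have hmapF : Subgroup.map π (FittingSeries G (k + 1)) = FittingSubgroup (G ⧸ Nc) := by
    rw [hFk1, Subgroup.map_comap_eq, MonoidHom.range_eq_top_of_surjective π hsurj, top_inf_eq]
  have hcore : Subgroup.map π Cj ≤ Subgroup.map π Dj := by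
    refine core hp hq hpq (Subgroup.map_mono hDC)
      (map_le_normalizer_map π hCN) (map_le_normalizer_map π hCN')
      (map_le_normalizer_map π hCjN) ?_ ?_ ?_ ?_
      fitting_normal (pRad_normal p) (pRad_pgroup p) ?_ (fitting_decomp hp)
    · rintro _ ⟨x, hx, rfl⟩ _ ⟨y, hy, rfl⟩
      rw [← map_commutatorElement]
      exact Subgroup.mem_map_of_mem π (hcent x hx y hy)
    · rw [← Subgroup.map_commutator, ← Subgroup.map_sup, hcomm]
    · rintro _ ⟨x, hx, rfl⟩
      obtain ⟨m, hm⟩ := hCip x hx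
      exact ⟨m, by rw [← map_pow]; exact Subgroup.mem_map_of_mem π hm⟩
    · rintro _ ⟨y, hy, rfl⟩
      obtain ⟨m, hm⟩ := hCjq y hy
      exact ⟨m, by rw [← map_pow]; exact Subgroup.mem_map_of_mem π hm⟩
    · calc Subgroup.map π Ci ≤ Subgroup.map π (Di ⊔ FittingSeries G (k + 1)) :=
            Subgroup.map_mono hstep
        _ = Subgroup.map π Di ⊔ FittingSubgroup (G ⧸ Nc) := by rw [Subgroup.map_sup, hmapF]
  calc Cj ≤ Subgroup.comap π (Subgroup.map π Cj) := Subgroup.le_comap_map π Cj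
    _ ≤ Subgroup.comap π (Subgroup.map π Dj) := Subgroup.comap_mono hcore
    _ = Dj ⊔ Nc := by rw [Subgroup.comap_map_eq, QuotientGroup.ker_mk']
    _ ≤ Dj ⊔ FittingSeries G k := sup_le_sup_left (Subgroup.normalCore_le _) Dj

theorem fittingSeries_one_le (G : Type*) [Group G] :
    FittingSeries G 1 ≤ FittingSubgroup G := by
  have hNc : (FittingSeries G 0).normalCore = (⊥ : Subgroup G) :=
    le_bot_iff.mp (Subgroup.normalCore_le _)
  set Nc := (FittingSeries G 0).normalCore with hNcdef
  set π := QuotientGroup.mk' Nc with hπ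
  have hsurj : Function.Surjective π := QuotientGroup.mk'_surjective Nc
  have hinj : Function.Injective π := by
    rw [← MonoidHom.ker_eq_bot_iff, QuotientGroup.ker_mk']
    exact hNc
  set e := MulEquiv.ofBijective π ⟨hinj, hsurj⟩ with he
  have h1 : FittingSeries G 1 = Subgroup.comap π (FittingSubgroup (G ⧸ Nc)) := rfl
  have h2 : ∀ X : Subgroup (G ⧸ Nc), Subgroup.comap π X = Subgroup.map e.symm.toMonoidHom X := by
    intro X
    ext x
    rw [Subgroup.mem_comap, Subgroup.mem_map_equiv]
    simp [he]
    exact Iff.rfl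
  rw [h1, h2]
  have h3 : Subgroup.map e.symm.toMonoidHom (FittingSubgroup (G ⧸ Nc)) =
      ⨆ N ∈ {N : Subgroup (G ⧸ Nc) | N.Normal ∧ Group.IsNilpotent ↥N},
        Subgroup.map e.symm.toMonoidHom N :=
    (Subgroup.gc_map_comap e.symm.toMonoidHom).l_sSup
  rw [h3]
  refine iSup_le fun N => iSup_le fun hN => ?_
  refine le_sSup ⟨Subgroup.Normal.map hN.1 _ e.symm.surjective, ?_⟩
  have := hN.2
  exact nilpotent_of_mulEquiv (Subgroup.equivMapOfInjective N _ e.symm.injective)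


end FChainAux

open FChainAux in
/-- If `G` has an `𝓕`-chain of length `n = f(G)` (with `D_n = 1`, as required by the
definition), then its last term `C_n` is contained in the Fitting subgroup. -/
theorem last_term_of_maximal_fchain_le_fitting
    (G : Type*) [Group G] [Finite G] [Group.IsSolvable G] {n : ℕ} (hn : 0 < n)
    (p : Fin n → ℕ) (C D : Fin n → Subgroup G) (hchain : IsFChain G n p C D)
    (hf : fittingLength G = n) :
    C ⟨n - 1, by omega⟩ ≤ FittingSubgroup G := by
  have hne : {m : ℕ | FittingSeries G m = ⊤}.Nonempty := by
    by_contra hcon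
    rw [Set.not_nonempty_iff_eq_empty] at hcon
    have h0 : fittingLength G = 0 := by
      rw [fittingLength, hcon, Nat.sInf_empty]
    omega
  have hFn : FittingSeries G n = ⊤ := by
    have h0 : FittingSeries G (fittingLength G) = ⊤ := Nat.sInf_mem hne
    rwa [hf] at h0
  have hpow : ∀ i : Fin n, ∀ x ∈ C i, ∃ m, x ^ (p i) ^ m ∈ D i := by
    intro i x hx
    haveI := hchain.normal i
    set ρ := QuotientGroup.mk' ((D i).subgroupOf (C i)) with hρ
    obtain ⟨m, hm⟩ := hchain.pgroup i (ρ ⟨x, hx⟩)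
    refine ⟨m, ?_⟩
    rw [← map_pow, ← MonoidHom.mem_ker, QuotientGroup.ker_mk'] at hm
    have hmem := Subgroup.mem_subgroupOf.mp hm
    simpa using hmem
  have hnormO : ∀ i : Fin n, C i ≤ Subgroup.normalizer ((D i) : Set _) := by
    intro i
    haveI := hchain.normal i
    exact Subgroup.le_normalizer_of_normal_subgroupOf (hchain.le i)
  have main : ∀ j : ℕ, (hj : j < n) → C ⟨j, hj⟩ ≤ D ⟨j, hj⟩ ⊔ FittingSeries G (n - j) := by
    intro j
    induction j with
    | zero =>
      intro hj
      rw [Nat.sub_zero, hFn, sup_top_eq]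
      exact le_top
    | succ j ih =>
      intro hj
      have hj' : j < n := by omega
      have hih := ih hj'
      have hlt : j + 1 < n := hj
      have hk : n - j = (n - (j + 1)) + 1 := by omega
      rw [hk] at hih
      exact step (hchain.prime ⟨j, hj'⟩) (hchain.prime ⟨j + 1, hj⟩)
        (hchain.p_ne ⟨j, hj'⟩ hlt)
        (hchain.le ⟨j, hj'⟩) (hchain.le ⟨j + 1, hj⟩)
        (hchain.norm_next ⟨j, hj'⟩ hlt).1 (hchain.norm_next ⟨j, hj'⟩ hlt).2
        (hnormO ⟨j + 1, hj⟩)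
        (hchain.cent_next ⟨j, hj'⟩ hlt) (hchain.comm_next ⟨j, hj'⟩ hlt)
        (hpow ⟨j, hj'⟩) (hpow ⟨j + 1, hj⟩) hih
  have hfinal := main (n - 1) (by omega)
  rw [hchain.d_last hn] at hfinal
  have hidx : n - (n - 1) = 1 := by omega
  rw [hidx, bot_sup_eq] at hfinal
  exact hfinal.trans (fittingSeries_one_le G)
end
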